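/- arXiv:1902.01296 — 3 statements merged into one kernel-verified Lean document; each statement's English description precedes it below -/
import Mathlib

section
/- The function u(x₁,x₂) = x₂² sin(x₁) satisfies ∂²u/∂x₁² + (1/2) x₂² ∂²u/∂x₂² = 0 at every point of ℝ², vanishes on the boundary of the cylinder C = (0,π) × ℝ, and is strictly positive for 0 < x₁ < π and x₂ ≠ 0. -/
open Real

theorem stmt_1 (v : ℝ → ℝ → ℝ)
    (hv : v = fun x₁ x₂ => x₂ ^ 2 * Real.sin x₁) :
    (∀ x₁ x₂ : ℝ,
      deriv (deriv (fun s => v s x₂)) x₁ +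
      (1 / 2) * x₂ ^ 2 * deriv (deriv (fun s => v x₁ s)) x₂ = 0) ∧
    (∀ x₁ x₂ : ℝ, (x₁ = 0 ∨ x₁ = π) → v x₁ x₂ = 0) ∧
    (∀ x₁ x₂ : ℝ, 0 < x₁ → x₁ < π → x₂ ≠ 0 → 0 < v x₁ x₂) := by
  subst hv
  refine ⟨fun x₁ x₂ => ?_, fun x₁ x₂ h => ?_, fun x₁ x₂ h1 h2 h3 => ?_⟩
  · have h1 : (deriv (fun s => x₂ ^ 2 * Real.sin s)) = fun s => x₂ ^ 2 * Real.cos s := by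
      funext s
      simp [deriv_const_mul _ (Real.differentiableAt_sin)]
    have h2 : deriv (deriv (fun s => x₂ ^ 2 * Real.sin s)) x₁ = -(x₂ ^ 2 * Real.sin x₁) := by
      rw [h1]
      simp [deriv_const_mul _ (Real.differentiableAt_cos), mul_comm]
    have h3 : (deriv (fun s : ℝ => s ^ 2 * Real.sin x₁)) = fun s : ℝ => 2 * s * Real.sin x₁ := by
      funext s
      have : DifferentiableAt ℝ (fun s : ℝ => s ^ 2) s := by fun_prop
      rw [deriv_mul_const this]
      rw [deriv_pow_field]; ring
    have h4 : deriv (deriv (fun s : ℝ => s ^ 2 * Real.sin x₁)) x₂ = 2 * Real.sin x₁ := by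
      rw [h3]
      have : DifferentiableAt ℝ (fun s : ℝ => 2 * s) x₂ := by fun_prop
      rw [show (fun s : ℝ => 2 * s * Real.sin x₁) = fun s : ℝ => (2 * s) * Real.sin x₁ from rfl,
        deriv_mul_const this]
      rw [deriv_const_mul _ differentiableAt_id]; simp
    simp only [h2, h4]
    ring
  · rcases h with h | h <;> simp [h]
  · exact mul_pos (by positivity) (Real.sin_pos_of_pos_of_lt_pi h1 h2)
end

section
/- Let Ω ⊂ ℝⁿ be a bounded open set contained in the slab {x : 0 < x₁ < d}, with d small. Suppose u ∈ C²(Ω) ∩ C(closure Ω) satisfies tr(A(x)D²u) + b(x)·Du + c(x)u ≥ 0 in Ω with A positive semidefinite, A₁₁(x) ≥ λ > 0, |b(x)| ≤ γ, 0 < c(x), c(x)/λ ≤ K, and u bounded above with u ≤ 0 on ∂Ω. If (e^{1+dγ/λ}/(1+dγ/λ)) d² K < 1, then u ≤ 0 in Ω. -/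
set_option maxHeartbeats 1000000

open Real RealInnerProductSpace

/-- The Hessian matrix of `u` at `x` (entries: second partial derivatives). -/
noncomputable def hessMatrix {n : ℕ} (u : EuclideanSpace ℝ (Fin n) → ℝ)
    (x : EuclideanSpace ℝ (Fin n)) : Matrix (Fin n) (Fin n) ℝ :=
  Matrix.of fun i j =>
    fderiv ℝ (fun y => fderiv ℝ u y (EuclideanSpace.single j 1)) x (EuclideanSpace.single i 1)

section Aux
open Filter Topology Set


lemma secondDerivTest {ψ : ℝ → ℝ} {m : ℝ}
    (hmax : IsLocalMax ψ 0)
    (hdiff : ∀ᶠ s in 𝓝 (0:ℝ), DifferentiableAt ℝ ψ s)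
    (hm : HasDerivAt (deriv ψ) m 0) : m ≤ 0 := by
  by_contra hpos
  push_neg at hpos
  have h0 : deriv ψ 0 = 0 := hmax.deriv_eq_zero
  have hs : Tendsto (slope (deriv ψ) 0) (𝓝[≠] (0:ℝ)) (𝓝 m) :=
    hasDerivAt_iff_tendsto_slope.mp hm
  have hev : ∀ᶠ s in 𝓝[>] (0:ℝ), 0 < deriv ψ s := by
    have h1 : ∀ᶠ s in 𝓝[≠] (0:ℝ), 0 < slope (deriv ψ) 0 s :=
      hs.eventually (eventually_gt_nhds hpos)
    have h2 : ∀ᶠ s in 𝓝[>] (0:ℝ), 0 < slope (deriv ψ) 0 s :=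
      h1.filter_mono (nhdsWithin_mono _ fun s hs => ne_of_gt hs)
    filter_upwards [h2, self_mem_nhdsWithin] with s h hs0
    have hsl : slope (deriv ψ) 0 s = deriv ψ s / s := by
      simp [slope_def_field, h0]
    rw [hsl] at h
    have := mul_pos h hs0
    rwa [div_mul_cancel₀] at this
    exact ne_of_gt hs0
  -- extract intervals
  obtain ⟨u, hu, hIoo⟩ := mem_nhdsGT_iff_exists_Ioo_subset.mp hev
  obtain ⟨ε, hε, hball⟩ := Metric.eventually_nhds_iff.mp (hdiff.and (hmax : ∀ᶠ s in 𝓝 (0:ℝ), ψ s ≤ ψ 0))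
  set r := min (u / 2) (ε / 2) with hr
  have hrpos : 0 < r := lt_min (by linarith [mem_Ioi.mp hu]) (by linarith)
  have hsub1 : Ioo (0:ℝ) r ⊆ Ioo 0 u := Ioo_subset_Ioo le_rfl (by
    have := min_le_left (u/2) (ε/2); linarith [mem_Ioi.mp hu])
  have hsub2 : Icc (0:ℝ) r ⊆ Metric.ball (0:ℝ) ε := by
    intro s hs
    simp only [Metric.mem_ball, Real.dist_eq, sub_zero]
    have := min_le_right (u/2) (ε/2)
    rw [abs_of_nonneg hs.1]
    linarith [hs.2]
  have hmono : StrictMonoOn ψ (Icc (0:ℝ) r) := by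
    apply strictMonoOn_of_deriv_pos (convex_Icc _ _)
    · intro s hs
      exact ((hball (hsub2 hs)).1).continuousAt.continuousWithinAt
    · intro s hs
      rw [interior_Icc] at hs
      exact hIoo (hsub1 hs)
  have hlt : ψ 0 < ψ r := hmono (left_mem_Icc.mpr hrpos.le) (right_mem_Icc.mpr hrpos.le) hrpos
  have : ψ r ≤ ψ 0 := (hball (hsub2 (right_mem_Icc.mpr hrpos.le))).2
  linarith


lemma bilinNonpos {E : Type*} [NormedAddCommGroup E] [NormedSpace ℝ E]
    {w : E → ℝ} {x₀ : E}
    (hmax : IsLocalMax w x₀)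
    (hw : ∀ᶠ y in 𝓝 x₀, DifferentiableAt ℝ w y)
    (hf' : DifferentiableAt ℝ (fderiv ℝ w) x₀)
    (v : E) :
    fderiv ℝ (fderiv ℝ w) x₀ v v ≤ 0 := by
  set L : ℝ → E := fun s => x₀ + s • v with hL
  have hLd : ∀ s : ℝ, HasDerivAt L v s := fun s => by
    simpa [hL] using ((hasDerivAt_id s).smul_const v).const_add x₀
  have hL0 : L 0 = x₀ := by simp [hL]
  have hLc : Tendsto L (𝓝 0) (𝓝 x₀) := by
    have h := (hLd 0).continuousAt
    unfold ContinuousAt at h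
    rwa [hL0] at h
  set ψ : ℝ → ℝ := fun s => w (L s) with hψ
  -- ψ is differentiable near 0 with deriv ψ s = fderiv w (L s) v
  have hev : ∀ᶠ s in 𝓝 (0:ℝ), DifferentiableAt ℝ w (L s) := hLc.eventually hw
  have hψd : ∀ᶠ s in 𝓝 (0:ℝ), HasDerivAt ψ (fderiv ℝ w (L s) v) s := by
    filter_upwards [hev] with s hs
    exact (hs.hasFDerivAt.comp_hasDerivAt s (hLd s))
  have hψdiff : ∀ᶠ s in 𝓝 (0:ℝ), DifferentiableAt ℝ ψ s := by
    filter_upwards [hψd] with s hs; exact hs.differentiableAt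
  have hderiv_eq : (fun s => deriv ψ s) =ᶠ[𝓝 (0:ℝ)] fun s => fderiv ℝ w (L s) v := by
    filter_upwards [hψd] with s hs; exact hs.deriv
  -- the derivative of s ↦ fderiv w (L s) v at 0 is fderiv (fderiv w) x₀ v v
  have hg : HasDerivAt (fun s => fderiv ℝ w (L s) v) (fderiv ℝ (fderiv ℝ w) x₀ v v) 0 := by
    have h1 : HasDerivAt (fun s => fderiv ℝ w (L s)) (fderiv ℝ (fderiv ℝ w) x₀ v) 0 := by
      have h0 : HasFDerivAt (fderiv ℝ w) (fderiv ℝ (fderiv ℝ w) x₀) (L 0) := by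
        rw [hL0]; exact hf'.hasFDerivAt
      exact h0.comp_hasDerivAt 0 (hLd 0)
    exact (ContinuousLinearMap.apply ℝ ℝ v).hasFDerivAt.comp_hasDerivAt 0 h1
  have hm : HasDerivAt (deriv ψ) (fderiv ℝ (fderiv ℝ w) x₀ v v) 0 :=
    hg.congr_of_eventuallyEq hderiv_eq
  have hψmax : IsLocalMax ψ 0 := by
    have : ∀ᶠ s in 𝓝 (0:ℝ), w (L s) ≤ w x₀ := hLc.eventually hmax
    filter_upwards [this] with s hs
    simpa [hψ, hL0] using hs
  exact secondDerivTest hψmax hψdiff hm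


lemma hess_apply {n : ℕ} {f : EuclideanSpace ℝ (Fin n) → ℝ} {x : EuclideanSpace ℝ (Fin n)}
    (hf' : DifferentiableAt ℝ (fderiv ℝ f) x) (i j : Fin n) :
    hessMatrix f x i j
      = fderiv ℝ (fderiv ℝ f) x (EuclideanSpace.single i 1) (EuclideanSpace.single j 1) := by
  have h : HasFDerivAt (fun y => fderiv ℝ f y (EuclideanSpace.single j 1))
      ((ContinuousLinearMap.apply ℝ ℝ (EuclideanSpace.single j 1)).comp
        (fderiv ℝ (fderiv ℝ f) x)) x := by
    have h0 := (ContinuousLinearMap.apply ℝ ℝ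
        (EuclideanSpace.single (𝕜 := ℝ) j 1)).hasFDerivAt.comp x hf'.hasFDerivAt
    exact h0
  simp [hessMatrix, h.fderiv]

lemma quad_sum {n : ℕ} (B : EuclideanSpace ℝ (Fin n) →L[ℝ] EuclideanSpace ℝ (Fin n) →L[ℝ] ℝ)
    (v : Fin n → ℝ) :
    ∑ i, ∑ j, v i * B (EuclideanSpace.single i 1) (EuclideanSpace.single j 1) * v j
      = B (∑ i, v i • EuclideanSpace.single i 1) (∑ j, v j • EuclideanSpace.single j 1) := by
  simp only [map_sum, map_smul, ContinuousLinearMap.sum_apply, ContinuousLinearMap.smul_apply,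
    smul_eq_mul, Finset.mul_sum, Finset.sum_mul]
  rw [Finset.sum_comm]
  exact Finset.sum_congr rfl fun i _ => Finset.sum_congr rfl fun j _ => by ring

open scoped MatrixOrder in
lemma trace_nonpos {n : ℕ} {A M : Matrix (Fin n) (Fin n) ℝ} (hA : A.PosSemidef)
    {B : EuclideanSpace ℝ (Fin n) →L[ℝ] EuclideanSpace ℝ (Fin n) →L[ℝ] ℝ}
    (hM : ∀ i j, M i j = B (EuclideanSpace.single i 1) (EuclideanSpace.single j 1))
    (hB : ∀ v : EuclideanSpace ℝ (Fin n), B v v ≤ 0) :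
    Matrix.trace (A * M) ≤ 0 := by
  set S := CFC.sqrt A with hS
  have hSS : S * S = A := CFC.sqrt_mul_sqrt_self A hA.nonneg
  have hSh : S.IsHermitian := (Matrix.nonneg_iff_posSemidef.mp (CFC.sqrt_nonneg A)).1
  have hcyc : Matrix.trace (A * M) = Matrix.trace (S * M * S) := by
    rw [← hSS, Matrix.mul_assoc, Matrix.trace_mul_comm]
  rw [hcyc, Matrix.trace]
  apply Finset.sum_nonpos
  intro k _
  have hsym : ∀ j, S j k = S k j := fun j => by
    conv_lhs => rw [← hSh.eq]
    simp [Matrix.conjTranspose_apply]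
  have hdiag : (S * M * S).diag k = ∑ i, ∑ j, S k i * M i j * S j k := by
    simp [Matrix.diag, Matrix.mul_apply, Finset.sum_mul]
    rw [Finset.sum_comm]
  rw [hdiag]
  calc ∑ i, ∑ j, S k i * M i j * S j k
      = ∑ i, ∑ j, (fun i => S k i) i * B (EuclideanSpace.single i 1)
          (EuclideanSpace.single j 1) * (fun i => S k i) j := by
        refine Finset.sum_congr rfl fun i _ => Finset.sum_congr rfl fun j _ => ?_
        rw [hM, hsym]
    _ ≤ 0 := by rw [quad_sum]; exact hB _


section Phi
variable (i0 : Fin n) (α C : ℝ)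

noncomputable def phiF (x : EuclideanSpace ℝ (Fin n)) : ℝ := C - Real.exp (α * x i0)

lemma phiF_hasFDerivAt (x : EuclideanSpace ℝ (Fin n)) :
    HasFDerivAt (phiF i0 α C)
      ((-(α * Real.exp (α * x i0))) • (EuclideanSpace.proj i0 : EuclideanSpace ℝ (Fin n) →L[ℝ] ℝ)) x := by
  have h1 : HasFDerivAt (fun y : EuclideanSpace ℝ (Fin n) => α * y i0)
      (α • (EuclideanSpace.proj i0 : EuclideanSpace ℝ (Fin n) →L[ℝ] ℝ)) x := by
    simpa using ((EuclideanSpace.proj (𝕜 := ℝ) i0).hasFDerivAt (x := x)).const_mul α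
  have h2 := h1.exp
  have h3 := h2.const_sub C
  refine h3.congr_fderiv ?_
  ext v
  simp only [ContinuousLinearMap.smul_apply, ContinuousLinearMap.neg_apply, ContinuousLinearMap.add_apply, ContinuousLinearMap.smulRight_apply, ContinuousLinearMap.zero_apply, smul_eq_mul, neg_smul, phiF, PiLp.proj_apply]
  simp
  ring

lemma phiF_contDiff : ContDiff ℝ 2 (phiF i0 α C : EuclideanSpace ℝ (Fin n) → ℝ) := by
  apply ContDiff.sub contDiff_const
  apply Real.contDiff_exp.comp
  exact (contDiff_const.mul (EuclideanSpace.proj (𝕜 := ℝ) i0).contDiff)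

lemma phiF_fderiv (x : EuclideanSpace ℝ (Fin n)) (v : EuclideanSpace ℝ (Fin n)) :
    fderiv ℝ (phiF i0 α C) x v = -(α * Real.exp (α * x i0)) * v i0 := by
  rw [(phiF_hasFDerivAt i0 α C x).fderiv]
  simp

lemma phiF_snd_fderiv (x : EuclideanSpace ℝ (Fin n)) (v w : EuclideanSpace ℝ (Fin n)) :
    fderiv ℝ (fderiv ℝ (phiF i0 α C)) x v w = -(α^2 * Real.exp (α * x i0)) * v i0 * w i0 := by
  have heq : (fderiv ℝ (phiF i0 α C) : EuclideanSpace ℝ (Fin n) → _)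
      = fun y => (-(α * Real.exp (α * y i0))) • (EuclideanSpace.proj i0 : EuclideanSpace ℝ (Fin n) →L[ℝ] ℝ) := by
    funext y; exact (phiF_hasFDerivAt i0 α C y).fderiv
  rw [heq]
  have h1 : HasFDerivAt (fun y : EuclideanSpace ℝ (Fin n) => -(α * Real.exp (α * y i0)))
      ((-(α * (α * Real.exp (α * x i0)))) • (EuclideanSpace.proj i0 : EuclideanSpace ℝ (Fin n) →L[ℝ] ℝ)) x := by
    have h1' : HasFDerivAt (fun y : EuclideanSpace ℝ (Fin n) => α * y i0)
        (α • (EuclideanSpace.proj i0 : EuclideanSpace ℝ (Fin n) →L[ℝ] ℝ)) x := by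
      simpa using ((EuclideanSpace.proj (𝕜 := ℝ) i0).hasFDerivAt (x := x)).const_mul α
    have h2 := (h1'.exp.const_mul α).neg
    refine h2.congr_fderiv ?_
    ext w
    simp only [ContinuousLinearMap.smul_apply, ContinuousLinearMap.neg_apply, ContinuousLinearMap.add_apply, ContinuousLinearMap.smulRight_apply, ContinuousLinearMap.zero_apply, smul_eq_mul, neg_smul, phiF, PiLp.proj_apply]
    simp
    ring
  have h3 := h1.smul (hasFDerivAt_const (EuclideanSpace.proj i0 : EuclideanSpace ℝ (Fin n) →L[ℝ] ℝ) x)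
  rw [show (fun y : EuclideanSpace ℝ (Fin n) => (-(α * Real.exp (α * y i0))) • (EuclideanSpace.proj i0 : EuclideanSpace ℝ (Fin n) →L[ℝ] ℝ)) = ((fun y : EuclideanSpace ℝ (Fin n) => -(α * Real.exp (α * y i0))) • fun _ => (EuclideanSpace.proj i0 : EuclideanSpace ℝ (Fin n) →L[ℝ] ℝ)) from rfl, h3.fderiv]
  simp only [ContinuousLinearMap.smul_apply, ContinuousLinearMap.neg_apply, ContinuousLinearMap.add_apply, ContinuousLinearMap.smulRight_apply, ContinuousLinearMap.zero_apply, smul_eq_mul, neg_smul, phiF, PiLp.proj_apply]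
  ring
end Phi


lemma innerGrad {n : ℕ} (f : EuclideanSpace ℝ (Fin n) → ℝ) (x v : EuclideanSpace ℝ (Fin n)) :
    ⟪v, gradient f x⟫ = fderiv ℝ f x v := by
  rw [real_inner_comm, gradient]
  exact InnerProductSpace.toDual_symm_apply

lemma coord_le_norm {n : ℕ} (v : EuclideanSpace ℝ (Fin n)) (i : Fin n) : |v i| ≤ ‖v‖ := by
  have h := abs_real_inner_le_norm (EuclideanSpace.single i (1:ℝ)) v
  rw [EuclideanSpace.inner_single_left] at h
  simpa using h

end Aux

theorem stmt_8 (n : ℕ) (hn : 0 < n) (d lam γ K : ℝ) (hd : 0 < d) (hlam : 0 < lam)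
    (hγ : 0 ≤ γ) (hK : 0 ≤ K)
    (Ω : Set (EuclideanSpace ℝ (Fin n)))
    (hΩo : IsOpen Ω) (hΩb : Bornology.IsBounded Ω)
    (hslab : Ω ⊆ {x | 0 < x ⟨0, hn⟩ ∧ x ⟨0, hn⟩ < d})
    (A : EuclideanSpace ℝ (Fin n) → Matrix (Fin n) (Fin n) ℝ)
    (b : EuclideanSpace ℝ (Fin n) → EuclideanSpace ℝ (Fin n))
    (c : EuclideanSpace ℝ (Fin n) → ℝ)
    (hA : ∀ x ∈ Ω, (A x).PosSemidef) (hA11 : ∀ x ∈ Ω, lam ≤ A x ⟨0, hn⟩ ⟨0, hn⟩)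
    (hb : ∀ x ∈ Ω, ‖b x‖ ≤ γ) (hc : ∀ x ∈ Ω, 0 < c x) (hcK : ∀ x ∈ Ω, c x / lam ≤ K)
    (u : EuclideanSpace ℝ (Fin n) → ℝ)
    (hu2 : ContDiffOn ℝ 2 u Ω) (huc : ContinuousOn u (closure Ω))
    (hub : ∃ M : ℝ, ∀ x ∈ Ω, u x ≤ M)
    (hbdry : ∀ x ∈ frontier Ω, u x ≤ 0)
    (hsub : ∀ x ∈ Ω,
      0 ≤ Matrix.trace (A x * hessMatrix u x) + ⟪b x, gradient u x⟫ + c x * u x)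
    (hnarrow : Real.exp (1 + d * (γ / lam)) / (1 + d * (γ / lam)) * d ^ 2 * K < 1) :
    ∀ x ∈ Ω, u x ≤ 0 := by
  classical
  by_contra hcon
  push_neg at hcon
  obtain ⟨x₁, hx₁Ω, hx₁pos⟩ := hcon
  set i0 : Fin n := ⟨0, hn⟩ with hi0
  set α : ℝ := (1 + d * (γ / lam)) / d with hαdef
  set C : ℝ := Real.exp (α * d) + 1 with hCdef
  set φ : EuclideanSpace ℝ (Fin n) → ℝ := phiF i0 α C with hφdef
  -- basic numeric facts
  have h1γ : (0:ℝ) < 1 + d * (γ / lam) := by positivity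
  have hα : 0 < α := div_pos h1γ hd
  have hαd : α * d = 1 + d * (γ / lam) := div_mul_cancel₀ _ hd.ne'
  have hα1 : α = 1 / d + γ / lam := by
    rw [hαdef]; field_simp
  -- key numeric bound  K * exp(αd) < α / d
  have hKexp : K * Real.exp (α * d) < α / d := by
    have h2 : Real.exp (α * d) / (α * d) * d ^ 2 * K < 1 := by rwa [hαd]
    have had : 0 < α * d := mul_pos hα hd
    have e1 : Real.exp (α * d) / (α * d) * d ^ 2 * K
        = (Real.exp (α * d) * d ^ 2 * K) / (α * d) := by ring
    rw [e1, div_lt_one had] at h2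
    have h4 : (K * Real.exp (α * d) * d) * d < α * d := by nlinarith [h2]
    have h5 : K * Real.exp (α * d) * d < α := lt_of_mul_lt_mul_right (by linarith) hd.le
    rw [lt_div_iff₀ hd]; exact h5
  -- closure of Ω lies in the closed slab
  have hclos : closure Ω ⊆ {x : EuclideanSpace ℝ (Fin n) | x i0 ≤ d} := by
    apply closure_minimal
    · exact fun x hx => (hslab hx).2.le
    · exact isClosed_le ((EuclideanSpace.proj (𝕜 := ℝ) i0).continuous) continuous_const
  -- φ > 0 on closure Ω
  have hφpos : ∀ x ∈ closure Ω, 0 < φ x := by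
    intro x hx
    have h1 : α * x i0 ≤ α * d := mul_le_mul_of_nonneg_left (hclos hx) hα.le
    have := Real.exp_le_exp.mpr h1
    simp only [hφdef, phiF, hCdef]
    linarith
  -- exp(α x i0) ≥ 1 on Ω, and φ ≤ exp(αd) on Ω
  have hexp1 : ∀ x ∈ Ω, 1 ≤ Real.exp (α * x i0) := by
    intro x hx
    have : 0 ≤ α * x i0 := le_of_lt (mul_pos hα (hslab hx).1)
    exact Real.one_le_exp this
  have hφub : ∀ x ∈ Ω, φ x ≤ Real.exp (α * d) := by
    intro x hx
    have := hexp1 x hx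
    simp only [hφdef, phiF, hCdef]
    linarith
  -- b-coordinate lower bound
  have hb₀ : ∀ x ∈ Ω, -γ ≤ b x i0 := by
    intro x hx
    have h1 := coord_le_norm (b x) i0
    have h2 := hb x hx
    have := abs_le.mp (le_trans h1 h2)
    exact this.1
  -- the key differential inequality for the barrier
  have hKey : ∀ x ∈ Ω, c x * φ x < (α ^ 2 * A x i0 i0 + α * b x i0) * Real.exp (α * x i0) := by
    intro x hx
    have hcx := hc x hx
    have hcl : c x ≤ K * lam := by
      have := hcK x hx
      calc c x = c x / lam * lam := by field_simp
        _ ≤ K * lam := by nlinarith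
    have h1 : c x * φ x ≤ (K * lam) * Real.exp (α * d) := by
      have hφx := hφpos x (subset_closure hx)
      have := hφub x hx
      nlinarith
    have h2 : (K * lam) * Real.exp (α * d) < lam * (α / d) := by
      have := hKexp
      nlinarith
    have h3 : lam * (α / d) = α ^ 2 * lam - α * γ := by
      rw [hα1]; field_simp; ring
    have h4 : α ^ 2 * lam - α * γ ≤ α ^ 2 * A x i0 i0 + α * b x i0 := by
      have hAx := hA11 x hx
      have hbx := hb₀ x hx
      nlinarith [sq_nonneg α]
    have h5 : 0 < α ^ 2 * lam - α * γ := by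
      rw [← h3]; positivity
    have h6 : (α ^ 2 * A x i0 i0 + α * b x i0) * 1
        ≤ (α ^ 2 * A x i0 i0 + α * b x i0) * Real.exp (α * x i0) := by
      apply mul_le_mul_of_nonneg_left (hexp1 x hx)
      linarith
    linarith [h1, h2, h3.ge, h3.le]
  -- maximize u / φ over the compact closure
  have hcomp : IsCompact (closure Ω) := hΩb.isCompact_closure
  have hne : (closure Ω).Nonempty := ⟨x₁, subset_closure hx₁Ω⟩
  have hφcont : Continuous φ := (phiF_contDiff i0 α C).continuous
  have hgc : ContinuousOn (fun y => u y / φ y) (closure Ω) :=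
    huc.div hφcont.continuousOn (fun y hy => (hφpos y hy).ne')
  obtain ⟨x₀, hx₀cl, hx₀max⟩ := hcomp.exists_isMaxOn hne hgc
  set t : ℝ := u x₀ / φ x₀ with htdef
  have ht : 0 < t := by
    have h1 : u x₁ / φ x₁ ≤ t := hx₀max (subset_closure hx₁Ω)
    have h2 : 0 < u x₁ / φ x₁ := div_pos hx₁pos (hφpos x₁ (subset_closure hx₁Ω))
    linarith
  have hx₀Ω : x₀ ∈ Ω := by
    by_contra hnot
    have hfr : x₀ ∈ frontier Ω := by
      rw [hΩo.frontier_eq]; exact ⟨hx₀cl, hnot⟩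
    have h1 : u x₀ ≤ 0 := hbdry x₀ hfr
    have h2 : t ≤ 0 := div_nonpos_iff.mpr (Or.inr ⟨h1, (hφpos x₀ hx₀cl).le⟩)
    linarith
  have hφx₀ := hφpos x₀ hx₀cl
  have hux₀ : u x₀ = t * φ x₀ := by
    rw [htdef]; field_simp
  -- w := u - t φ has an interior local max at x₀ with w x₀ = 0
  set w : EuclideanSpace ℝ (Fin n) → ℝ := fun y => u y - t * φ y with hwdef
  have hw0 : w x₀ = 0 := by simp [hwdef, hux₀]
  have hwmax : IsLocalMax w x₀ := by
    filter_upwards [hΩo.mem_nhds hx₀Ω] with y hy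
    have h1 : u y / φ y ≤ t := hx₀max (subset_closure hy)
    have h2 := hφpos y (subset_closure hy)
    have : u y ≤ t * φ y := by
      rw [div_le_iff₀ h2] at h1; linarith
    simp only [hwdef, hw0]
    linarith
  -- differentiability bookkeeping
  have hφ2 : ContDiff ℝ 2 φ := phiF_contDiff i0 α C
  have hu2at : ContDiffAt ℝ 2 u x₀ := hu2.contDiffAt (hΩo.mem_nhds hx₀Ω)
  have hw2 : ContDiffAt ℝ 2 w x₀ := hu2at.sub ((contDiff_const.mul hφ2).contDiffAt)
  have hwdiffev : ∀ᶠ y in nhds x₀, DifferentiableAt ℝ w y := by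
    filter_upwards [hΩo.mem_nhds hx₀Ω] with y hy
    exact ((hu2.contDiffAt (hΩo.mem_nhds hy)).sub
      ((contDiff_const.mul hφ2).contDiffAt)).differentiableAt (by norm_num)
  have hw' : DifferentiableAt ℝ (fderiv ℝ w) x₀ :=
    (hw2.fderiv_right (m := 1) (by norm_num)).differentiableAt (by norm_num)
  have hu' : DifferentiableAt ℝ (fderiv ℝ u) x₀ :=
    (hu2at.fderiv_right (m := 1) (by norm_num)).differentiableAt (by norm_num)
  have hφ' : DifferentiableAt ℝ (fderiv ℝ φ) x₀ :=
    ((hφ2.contDiffAt).fderiv_right (m := 1) (by norm_num)).differentiableAt (by norm_num)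
  -- fderiv decomposition u = w + t φ
  have hfder : ∀ y ∈ Ω, fderiv ℝ u y = fderiv ℝ w y + t • fderiv ℝ φ y := by
    intro y hy
    have hwd : DifferentiableAt ℝ w y :=
      ((hu2.contDiffAt (hΩo.mem_nhds hy)).sub
        ((contDiff_const.mul hφ2).contDiffAt)).differentiableAt (by norm_num)
    have hφd : DifferentiableAt ℝ φ y := (hφ2.differentiable (by norm_num)).differentiableAt
    have hueq : u = fun z => w z + t * φ z := by
      funext z; simp [hwdef]
    rw [hueq, fderiv_fun_add hwd (hφd.const_mul t), fderiv_const_mul hφd t]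
  have hBu : fderiv ℝ (fderiv ℝ u) x₀
      = fderiv ℝ (fderiv ℝ w) x₀ + t • fderiv ℝ (fderiv ℝ φ) x₀ := by
    have hev2 : fderiv ℝ u =ᶠ[nhds x₀] fun y => fderiv ℝ w y + t • fderiv ℝ φ y := by
      filter_upwards [hΩo.mem_nhds hx₀Ω] with y hy
      exact hfder y hy
    rw [hev2.fderiv_eq, fderiv_fun_add (g := fun y => t • fderiv ℝ φ y) hw' (hφ'.const_smul t), fderiv_fun_const_smul hφ' t]
  -- Hessian decomposition
  have hMeq : hessMatrix u x₀ = hessMatrix w x₀ + t • hessMatrix φ x₀ := by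
    ext i j
    rw [Matrix.add_apply, Matrix.smul_apply, hess_apply hu', hess_apply hw',
      hess_apply hφ', hBu]
    simp
  -- trace bounds
  have htrw : Matrix.trace (A x₀ * hessMatrix w x₀) ≤ 0 :=
    trace_nonpos (hA x₀ hx₀Ω) (fun i j => hess_apply hw' i j)
      (fun v => bilinNonpos hwmax hwdiffev hw' v)
  have htrφ : Matrix.trace (A x₀ * hessMatrix φ x₀)
      = A x₀ i0 i0 * (-(α ^ 2 * Real.exp (α * x₀ i0))) := by
    have entry : ∀ i j : Fin n, hessMatrix φ x₀ i j
        = (if i = i0 then (-(α ^ 2 * Real.exp (α * x₀ i0))) else 0) *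
          (if j = i0 then (1:ℝ) else 0) := by
      intro i j
      rw [hess_apply hφ', phiF_snd_fderiv]
      simp [EuclideanSpace.single_apply]
      by_cases h1 : i = i0 <;> by_cases h2 : j = i0 <;>
        simp [h1, h2, eq_comm] <;> ring
    have : Matrix.trace (A x₀ * hessMatrix φ x₀)
        = ∑ k, ∑ m, A x₀ k m * hessMatrix φ x₀ m k := by
      simp [Matrix.trace, Matrix.mul_apply, Matrix.diag]
    rw [this]
    simp only [entry]
    rw [Finset.sum_eq_single i0]
    · rw [Finset.sum_eq_single i0]
      · simp
      · intro m _ hm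
        simp [hm]
      · simp
    · intro k _ hk
      apply Finset.sum_eq_zero
      intro m _
      simp [hk]
    · simp
  have htru : Matrix.trace (A x₀ * hessMatrix u x₀)
      ≤ t * (A x₀ i0 i0 * (-(α ^ 2 * Real.exp (α * x₀ i0)))) := by
    rw [hMeq, Matrix.mul_add, Matrix.mul_smul, Matrix.trace_add, Matrix.trace_smul, htrφ]
    simp only [smul_eq_mul]
    linarith [htrw]
  -- gradient part
  have hgrad : ⟪b x₀, gradient u x₀⟫ = t * (-(α * Real.exp (α * x₀ i0)) * b x₀ i0) := by
    rw [innerGrad, hfder x₀ hx₀Ω, hwmax.fderiv_eq_zero]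
    simp only [ContinuousLinearMap.add_apply, ContinuousLinearMap.zero_apply,
      ContinuousLinearMap.smul_apply, smul_eq_mul, zero_add]
    rw [phiF_fderiv]
  -- conclude
  have hsub₀ := hsub x₀ hx₀Ω
  rw [hgrad, hux₀] at hsub₀
  have hKey₀ := hKey x₀ hx₀Ω
  have hprod : 0 < t * ((α ^ 2 * A x₀ i0 i0 + α * b x₀ i0) * Real.exp (α * x₀ i0)
      - c x₀ * φ x₀) := mul_pos ht (by linarith)
  nlinarith [htru, hsub₀, hprod]
end

section
/- Let α, β > 0 with α > β, and define v(x) = sin(α x₁) e^{β φ(r)} on ℝⁿ, where r = √(x₂² + ⋯ + x_n²) and φ(r) = √(r²+1). Then at every point x with x₁ = π/(2α), the Hessian satisfies D²v(x) ≤ e^{βφ(r)} (−α² P₁ + β(β+1) Q) in the sense of quadratic forms, where P₁ is the orthogonal projection onto the x₁-axis and Q the orthogonal projection onto the span of x₂,…,x_n. -/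
open Real Finset

/-- Second directional derivative of `f` at `x` in directions `v`, `w`. -/
noncomputable def secondDeriv {n : ℕ} (f : EuclideanSpace ℝ (Fin n) → ℝ)
    (x v w : EuclideanSpace ℝ (Fin n)) : ℝ :=
  fderiv ℝ (fun y => fderiv ℝ f y v) x w

set_option maxHeartbeats 1000000 in
theorem stmt_9 (n : ℕ) (hn : 0 < n) (α β : ℝ) (hβ : 0 < β) (hαβ : β < α)
    (v : EuclideanSpace ℝ (Fin n) → ℝ)
    (hv : v = fun x => Real.sin (α * x ⟨0, hn⟩) *
      Real.exp (β * Real.sqrt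
        ((∑ i ∈ Finset.univ.filter (fun i : Fin n => i ≠ ⟨0, hn⟩), (x i) ^ 2) + 1))) :
    ∀ x : EuclideanSpace ℝ (Fin n), x ⟨0, hn⟩ = π / (2 * α) →
      ∀ w : EuclideanSpace ℝ (Fin n),
        secondDeriv v x w w ≤
          Real.exp (β * Real.sqrt
            ((∑ i ∈ Finset.univ.filter (fun i : Fin n => i ≠ ⟨0, hn⟩), (x i) ^ 2) + 1)) *
          (-(α ^ 2) * (w ⟨0, hn⟩) ^ 2 +
            β * (β + 1) *
              ∑ i ∈ Finset.univ.filter (fun i : Fin n => i ≠ ⟨0, hn⟩), (w i) ^ 2) := by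
  intro x hx w
  have hα : 0 < α := hβ.trans hαβ
  set i0 : Fin n := ⟨0, hn⟩ with hi0
  set F : Finset (Fin n) := Finset.univ.filter (fun i : Fin n => i ≠ i0) with hFdef
  -- basic functions
  set s : EuclideanSpace ℝ (Fin n) → ℝ := fun y => ∑ i ∈ F, (y i) ^ 2 with hsdef
  set ψ : EuclideanSpace ℝ (Fin n) → ℝ := fun y => Real.sqrt (s y + 1) with hψdef
  have hs_nonneg : ∀ y, 0 ≤ s y := fun y => Finset.sum_nonneg fun i _ => sq_nonneg _
  have hs1_pos : ∀ y, 0 < s y + 1 := fun y => by linarith [hs_nonneg y]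
  have hψ_sq : ∀ y, ψ y ^ 2 = s y + 1 := fun y => Real.sq_sqrt (hs1_pos y).le
  have hψ_one : ∀ y, 1 ≤ ψ y := by
    intro y
    nlinarith [hψ_sq y, Real.sqrt_nonneg (s y + 1), hs_nonneg y]
  have hψ_pos : ∀ y, 0 < ψ y := fun y => lt_of_lt_of_le one_pos (hψ_one y)
  -- derivative of s
  set Ds : EuclideanSpace ℝ (Fin n) → (EuclideanSpace ℝ (Fin n) →L[ℝ] ℝ) :=
    fun y => ∑ i ∈ F, (2 * y i) • (EuclideanSpace.proj i : EuclideanSpace ℝ (Fin n) →L[ℝ] ℝ)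
    with hDsdef
  have hsd : ∀ y, HasFDerivAt s (Ds y) y := by
    intro y
    apply HasFDerivAt.fun_sum
    intro i _
    have h := (((EuclideanSpace.proj i : EuclideanSpace ℝ (Fin n) →L[ℝ] ℝ).hasFDerivAt
      (x := y)).mul ((EuclideanSpace.proj i).hasFDerivAt (x := y)))
    have hfun : (fun z : EuclideanSpace ℝ (Fin n) => (z i) ^ 2)
        = fun z => (EuclideanSpace.proj i : EuclideanSpace ℝ (Fin n) →L[ℝ] ℝ) z *
            (EuclideanSpace.proj i : EuclideanSpace ℝ (Fin n) →L[ℝ] ℝ) z := by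
      funext z; simp [sq]
    rw [hfun]
    refine h.congr_fderiv ?_
    ext u
    simp
    ring
  -- derivative of ψ
  have hψd : ∀ y, HasFDerivAt ψ ((1 / (2 * ψ y)) • Ds y) y := by
    intro y
    have h1 : HasFDerivAt (fun z => s z + 1) (Ds y) y := (hsd y).add_const 1
    have h2 := (Real.hasDerivAt_sqrt (hs1_pos y).ne').comp_hasFDerivAt y h1
    simpa [hψdef, Function.comp_def] using h2
  -- derivative of G = exp (β ψ)
  set G : EuclideanSpace ℝ (Fin n) → ℝ := fun y => Real.exp (β * ψ y) with hGdef
  set DG : EuclideanSpace ℝ (Fin n) → (EuclideanSpace ℝ (Fin n) →L[ℝ] ℝ) :=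
    fun y => Real.exp (β * ψ y) • (β • ((1 / (2 * ψ y)) • Ds y)) with hDGdef
  have hGd : ∀ y, HasFDerivAt G (DG y) y := by
    intro y
    have h1 : HasFDerivAt (fun z => β * ψ z) (β • ((1 / (2 * ψ y)) • Ds y)) y :=
      (hψd y).const_mul β
    have h2 := (Real.hasDerivAt_exp (β * ψ y)).comp_hasFDerivAt y h1
    simpa [hGdef, hDGdef, Function.comp_def] using h2
  -- derivative of sin (α y₀)
  have hsind : ∀ y, HasFDerivAt (fun z : EuclideanSpace ℝ (Fin n) => Real.sin (α * z i0))
      (Real.cos (α * y i0) • (α • (EuclideanSpace.proj i0 :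
        EuclideanSpace ℝ (Fin n) →L[ℝ] ℝ))) y := by
    intro y
    have h1 : HasFDerivAt (fun z : EuclideanSpace ℝ (Fin n) => α * z i0)
        (α • (EuclideanSpace.proj i0 : EuclideanSpace ℝ (Fin n) →L[ℝ] ℝ)) y :=
      ((EuclideanSpace.proj i0 : EuclideanSpace ℝ (Fin n) →L[ℝ] ℝ).hasFDerivAt
        (x := y)).const_mul α
    have h2 := (Real.hasDerivAt_sin (α * y i0)).comp_hasFDerivAt y h1
    simpa [Function.comp_def] using h2
  -- derivative of v
  have hvd : ∀ y, HasFDerivAt v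
      (Real.sin (α * y i0) • DG y + G y • (Real.cos (α * y i0) • (α •
        (EuclideanSpace.proj i0 : EuclideanSpace ℝ (Fin n) →L[ℝ] ℝ)))) y := by
    intro y
    have h := (hsind y).mul (hGd y)
    rw [hv]
    exact h
  -- first derivative in direction w, as an explicit function
  set f₁ : EuclideanSpace ℝ (Fin n) → ℝ := fun y =>
    Real.sin (α * y i0) * (Real.exp (β * ψ y) * (β * ((1 / (2 * ψ y)) *
      (∑ i ∈ F, 2 * y i * w i)))) +
    Real.exp (β * ψ y) * (Real.cos (α * y i0) * (α * w i0)) with hf₁def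
  have hfd : (fun y => fderiv ℝ v y w) = f₁ := by
    funext y
    rw [(hvd y).fderiv]
    simp only [hf₁def, hDGdef, hDsdef, hGdef, ContinuousLinearMap.add_apply,
      ContinuousLinearMap.coe_smul', Pi.smul_apply, smul_eq_mul,
      ContinuousLinearMap.coe_sum', Finset.sum_apply, PiLp.proj_apply]
  -- abbreviations at the point x
  set p : ℝ := ∑ i ∈ F, x i * w i with hpdef
  set q : ℝ := ∑ i ∈ F, (w i) ^ 2 with hqdef
  have hq_nonneg : 0 ≤ q := Finset.sum_nonneg fun i _ => sq_nonneg _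
  have hψx := hψ_pos x
  have hψx1 := hψ_one x
  have hπ : α * x i0 = π / 2 := by
    rw [hx]; field_simp
  have hcos : Real.cos (α * x i0) = 0 := by rw [hπ]; exact Real.cos_pi_div_two
  have hsin : Real.sin (α * x i0) = 1 := by rw [hπ]; exact Real.sin_pi_div_two
  -- second derivative pieces at x
  have hT : HasFDerivAt (fun y : EuclideanSpace ℝ (Fin n) => ∑ i ∈ F, 2 * y i * w i)
      (∑ i ∈ F, w i • ((2:ℝ) •
        (EuclideanSpace.proj i : EuclideanSpace ℝ (Fin n) →L[ℝ] ℝ))) x := by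
    apply HasFDerivAt.fun_sum
    intro i _
    exact (((EuclideanSpace.proj i : EuclideanSpace ℝ (Fin n) →L[ℝ] ℝ).hasFDerivAt
      (x := x)).const_mul (2:ℝ)).mul_const (w i)
  have hc : HasFDerivAt (fun y => 1 / (2 * ψ y))
      ((-(((2 * ψ x) ^ 2)⁻¹)) • ((2:ℝ) • ((1 / (2 * ψ x)) • Ds x))) x := by
    have h1 : HasFDerivAt (fun y => 2 * ψ y) ((2:ℝ) • ((1 / (2 * ψ x)) • Ds x)) x :=
      (hψd x).const_mul 2
    have h2 := (hasDerivAt_inv (x := 2 * ψ x) (by positivity)).comp_hasFDerivAt x h1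
    have hfun : (fun y => 1 / (2 * ψ y)) = ((fun t : ℝ => t⁻¹) ∘ fun y => 2 * ψ y) := by
      funext z; simp [Function.comp, one_div]
    rw [hfun]; exact h2
  have hA3 : HasFDerivAt (fun y => β * ((1 / (2 * ψ y)) * (∑ i ∈ F, 2 * y i * w i)))
      (β • ((1 / (2 * ψ x)) • (∑ i ∈ F, w i • ((2:ℝ) •
          (EuclideanSpace.proj i : EuclideanSpace ℝ (Fin n) →L[ℝ] ℝ))) +
        (∑ i ∈ F, 2 * x i * w i) • ((-(((2 * ψ x) ^ 2)⁻¹)) •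
          ((2:ℝ) • ((1 / (2 * ψ x)) • Ds x))))) x :=
    (hc.mul hT).const_mul β
  have hcosd : HasFDerivAt (fun y : EuclideanSpace ℝ (Fin n) =>
      Real.cos (α * y i0) * (α * w i0))
      ((α * w i0) • ((-Real.sin (α * x i0)) • (α • (EuclideanSpace.proj i0 :
        EuclideanSpace ℝ (Fin n) →L[ℝ] ℝ)))) x := by
    have h1 : HasFDerivAt (fun z : EuclideanSpace ℝ (Fin n) => α * z i0)
        (α • (EuclideanSpace.proj i0 : EuclideanSpace ℝ (Fin n) →L[ℝ] ℝ)) x :=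
      ((EuclideanSpace.proj i0 : EuclideanSpace ℝ (Fin n) →L[ℝ] ℝ).hasFDerivAt
        (x := x)).const_mul α
    have h2 := ((Real.hasDerivAt_cos (α * x i0)).comp_hasFDerivAt x h1).mul_const (α * w i0)
    simpa [Function.comp] using h2
  have hexp2 : HasFDerivAt (fun y => Real.exp (β * ψ y)) (DG x) x := hGd x
  have hF1 := ((hsind x).mul (hexp2.mul hA3)).add (hexp2.mul hcosd)
  -- useful evaluations
  have hDs_apply : Ds x w = 2 * p := by
    rw [hDsdef, hpdef]
    simp only [ContinuousLinearMap.coe_sum', Finset.sum_apply,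
      ContinuousLinearMap.coe_smul', Pi.smul_apply, smul_eq_mul,
      PiLp.proj_apply, Finset.mul_sum]
    exact Finset.sum_congr rfl fun i _ => by ring
  have hsum1 : (∑ i ∈ F, 2 * x i * w i) = 2 * p := by
    rw [hpdef, Finset.mul_sum]
    exact Finset.sum_congr rfl fun i _ => by ring
  have hsum2 : ((∑ i ∈ F, w i • ((2:ℝ) •
      (EuclideanSpace.proj i : EuclideanSpace ℝ (Fin n) →L[ℝ] ℝ))) w) = 2 * q := by
    rw [hqdef, Finset.mul_sum]
    simp only [ContinuousLinearMap.coe_sum', Finset.sum_apply,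
      ContinuousLinearMap.coe_smul', Pi.smul_apply, smul_eq_mul,
      PiLp.proj_apply]
    exact Finset.sum_congr rfl fun i _ => by ring
  have hDG_apply : DG x w = Real.exp (β * ψ x) * (β * ((1 / (2 * ψ x)) * (2 * p))) := by
    rw [hDGdef]
    simp only [ContinuousLinearMap.coe_smul', Pi.smul_apply, smul_eq_mul, hDs_apply]
  have key : secondDeriv v x w w =
      Real.exp (β * ψ x) * (-(α ^ 2) * (w i0) ^ 2 +
        β ^ 2 * p ^ 2 / ψ x ^ 2 + β * (q / ψ x - p ^ 2 / ψ x ^ 3)) := by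
    show fderiv ℝ (fun y => fderiv ℝ v y w) x w = _
    rw [hfd, (show HasFDerivAt f₁ _ x from hF1).fderiv]
    simp only [ContinuousLinearMap.add_apply, ContinuousLinearMap.coe_smul',
      Pi.smul_apply, smul_eq_mul, hcos, hsin, hDG_apply, hDs_apply, hsum1, hsum2,
      PiLp.proj_apply]
    have hψne : ψ x ≠ 0 := (hψ_pos x).ne'
    field_simp
    ring
  rw [key]
  -- the final inequality
  have hGpos : 0 < Real.exp (β * ψ x) := Real.exp_pos _
  apply mul_le_mul_of_nonneg_left _ hGpos.le
  have hCS : p ^ 2 ≤ s x * q := by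
    rw [hpdef, hqdef, hsdef]
    exact Finset.sum_mul_sq_le_sq_mul_sq F (fun i => x i) (fun i => w i)
  have h1 : p ^ 2 / ψ x ^ 2 ≤ q := by
    rw [div_le_iff₀ (by positivity), hψ_sq x]
    nlinarith [hs_nonneg x]
  have h2 : q / ψ x ≤ q := div_le_self hq_nonneg hψx1
  have h3 : 0 ≤ p ^ 2 / ψ x ^ 3 := by positivity
  have h4 : β ^ 2 * (p ^ 2 / ψ x ^ 2) ≤ β ^ 2 * q :=
    mul_le_mul_of_nonneg_left h1 (by positivity)
  have h5 : β * (q / ψ x) ≤ β * q := mul_le_mul_of_nonneg_left h2 hβ.le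
  have h6 : 0 ≤ β * (p ^ 2 / ψ x ^ 3) := by positivity
  have e1 : β ^ 2 * p ^ 2 / ψ x ^ 2 = β ^ 2 * (p ^ 2 / ψ x ^ 2) := by ring
  have e2 : β * (q / ψ x - p ^ 2 / ψ x ^ 3) = β * (q / ψ x) - β * (p ^ 2 / ψ x ^ 3) := by
    ring
  have e3 : β * (β + 1) * q = β ^ 2 * q + β * q := by ring
  linarith [h4, h5, h6]
end
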